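/- Let N be a homogeneous Riemannian manifold and β : ℝ → N a unit-speed geodesic with β(0) = β(a) for some a ≠ 0. Then β'(0) = β'(a), i.e., every geodesic loop in a homogeneous Riemannian manifold is a closed geodesic. -/
import Mathlib

open scoped RealInnerProductSpace

theorem stmt0 {N E : Type*} [NormedAddCommGroup E] [InnerProductSpace ℝ E]
    (β : ℝ → N) (β' : ℝ → E)
    (hunit : ∀ t : ℝ, ‖β' t‖ = 1)
    (hKilling : ∀ (p : N) (v : E), ∃ X : N → E,
      X p = v ∧ ∀ s t : ℝ, ⟪X (β s), β' s⟫ = ⟪X (β t), β' t⟫)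
    (a : ℝ) (ha : a ≠ 0) (hloop : β 0 = β a) :
    β' 0 = β' a := by
  obtain ⟨X, hX0, hconst⟩ := hKilling (β 0) (β' 0)
  have h : ⟪X (β 0), β' 0⟫ = ⟪X (β a), β' a⟫ := hconst 0 a
  rw [hX0, ← hloop, hX0] at h
  have h1 : ⟪β' 0, β' a⟫ = 1 := by
    rw [← h, real_inner_self_eq_norm_sq, hunit 0]; norm_num
  have h2 := (inner_eq_norm_mul_iff (𝕜 := ℝ) (x := β' 0) (y := β' a)).mp
    (by rw [hunit 0, hunit a, h1]; norm_num)
  rw [hunit 0, hunit a] at h2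
  simpa using h2
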